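/- Rotation lemma: let u, v, w, y ∈ ℝ^2 be vectors with equal inner products ⟨u,v⟩ = ⟨w,y⟩. Then there exists a rotation R of ℝ^2 (an orthogonal 2×2 matrix with determinant 1) such that, writing Ru = (u_1,u_2)^⊤, Rv = (v_1,v_2)^⊤, Rw = (w_1,w_2)^⊤, Ry = (y_1,y_2)^⊤, one has u_1 v_1 = w_1 y_1 and u_2 v_2 = w_2 y_2. -/

import Mathlib

open Matrix

lemma exists_cs (a b : ℝ) : ∃ c s : ℝ, c ^ 2 + s ^ 2 = 1 ∧
    a * (c ^ 2 - s ^ 2) + 2 * b * (c * s) = 0 := by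
  by_cases ha : a = 0
  · exact ⟨1, 0, by norm_num, by simp [ha]⟩
  · have hab : (0:ℝ) < a ^ 2 + b ^ 2 := by positivity
    set r := Real.sqrt (a ^ 2 + b ^ 2) with hrdef
    have hr2 : r ^ 2 = a ^ 2 + b ^ 2 := Real.sq_sqrt hab.le
    have hrpos : 0 < r := Real.sqrt_pos.mpr hab
    have hbr : 0 < r + b := by
      rcases lt_or_ge 0 (r + b) with hh | hh
      · exact hh
      · exfalso
        have key : (r - b) * (r + b) ≤ 0 :=
          mul_nonpos_of_nonneg_of_nonpos (by linarith) hh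
        have ha2 : 0 < a ^ 2 := by positivity
        nlinarith [hr2, key, ha2]
    have hn : (0:ℝ) < (r + b) ^ 2 + a ^ 2 := by positivity
    set n := Real.sqrt ((r + b) ^ 2 + a ^ 2) with hndef
    have hn2 : n ^ 2 = (r + b) ^ 2 + a ^ 2 := Real.sq_sqrt hn.le
    have hnpos : 0 < n := Real.sqrt_pos.mpr hn
    refine ⟨(r + b) / n, -a / n, ?_, ?_⟩
    · field_simp
      linarith [hn2]
    · field_simp
      linear_combination a * hr2

/-- Rotation lemma: if `u, v, w, y ∈ ℝ²` satisfy `⟨u,v⟩ = ⟨w,y⟩`, then there is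
a rotation `R` of ℝ² (orthogonal with determinant 1) such that the rotated
vectors satisfy `u₁v₁ = w₁y₁` and `u₂v₂ = w₂y₂`. -/
theorem rotation_lemma (u v w y : Fin 2 → ℝ) (h : u ⬝ᵥ v = w ⬝ᵥ y) :
    ∃ R : Matrix (Fin 2) (Fin 2) ℝ, Rᵀ * R = 1 ∧ R.det = 1 ∧
      (R *ᵥ u) 0 * (R *ᵥ v) 0 = (R *ᵥ w) 0 * (R *ᵥ y) 0 ∧
      (R *ᵥ u) 1 * (R *ᵥ v) 1 = (R *ᵥ w) 1 * (R *ᵥ y) 1 := by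
  have h' : u 0 * v 0 + u 1 * v 1 = w 0 * y 0 + w 1 * y 1 := by
    simpa [dotProduct, Fin.sum_univ_two] using h
  obtain ⟨c, s, hc, hcond⟩ := exists_cs (u 0 * v 0 - w 0 * y 0)
    ((u 0 * v 1 + u 1 * v 0 - w 0 * y 1 - w 1 * y 0) / 2)
  refine ⟨!![c, s; -s, c], ?_, ?_, ?_, ?_⟩
  · have ht : (!![c, s; -s, c])ᵀ = !![c, -s; s, c] := by
      ext i j; fin_cases i <;> fin_cases j <;> rfl
    rw [ht, Matrix.mul_fin_two, Matrix.one_fin_two]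
    ext i j
    fin_cases i <;> fin_cases j <;> simp <;> nlinarith [hc]
  · simp [Matrix.det_fin_two_of]
    nlinarith [hc]
  · simp [Matrix.mulVec, dotProduct, Fin.sum_univ_two]
    linear_combination hcond + s ^ 2 * h'
  · simp [Matrix.mulVec, dotProduct, Fin.sum_univ_two]
    linear_combination -hcond + c ^ 2 * h'
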